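/- Let G be a finite connected multigraph, Π a partition of V into connected parts with quotient simple graph G̃_Π, and fix a part s. Let D be a Π-boundary divisor of G. Then there is no effective divisor D₁ equivalent to D whose support intersects every part of Π. -/
import Mathlib

open Finset

/-- Laplacian of a loopless multigraph given by edge multiplicities `m`. -/
def lap {V : Type*} [Fintype V] [DecidableEq V] (m : V → V → ℕ) : Matrix V V ℤ :=
  fun u v => if u = v then (∑ w, (m u w : ℤ)) else -(m u v : ℤ)

/-- Number of edges at `v` crossing between `A` and `B`. -/
def degAB {V : Type*} [Fintype V] [DecidableEq V] (m : V → V → ℕ)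
    (A B : Finset V) (v : V) : ℕ :=
  if v ∈ A then ∑ u ∈ B, m v u else if v ∈ B then ∑ u ∈ A, m v u else 0

lemma aux_geom : ∀ n : ℕ, ∑ s ∈ Finset.range n, 2^s < 2^n := by
  intro n; induction n with
  | zero => simp
  | succ n ih => rw [Finset.sum_range_succ, pow_succ]; omega

lemma aux_penult {α : Type*} (G : SimpleGraph α) (a b : α) (hne : a ≠ b) (h : G.Reachable a b) :
    ∃ c, G.Adj c b ∧ G.dist a c < G.dist a b := by
  obtain ⟨W, hW⟩ := h.exists_walk_length_eq_dist
  cases hWr : W.reverse with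
  | nil => exact absurd rfl hne
  | @cons _ c _ hadj q =>
      refine ⟨c, hadj.symm, ?_⟩
      have h1 : G.dist a c ≤ q.reverse.length := SimpleGraph.dist_le _
      have h2 : q.length + 1 = W.length := by
        have := congrArg SimpleGraph.Walk.length hWr
        simpa using this.symm
      simp only [SimpleGraph.Walk.length_reverse] at h1
      have hpos : 0 < G.dist a b := h.pos_dist_of_ne hne
      omega

/-- A Π-boundary divisor has no equivalent effective divisor supported in every part of Π. -/
theorem stmt10 {V : Type*} [Fintype V] [DecidableEq V] (k : ℕ) (hk : 0 < k)
    (m : V → V → ℕ) (hsymm : ∀ u v, m u v = m v u) (hloop : ∀ v, m v v = 0)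
    (hconn : (SimpleGraph.fromRel (fun u v => 0 < m u v)).Connected)
    -- the partition Π into k+1 connected parts, given by the part map `p`
    (p : V → Fin (k+1)) (hsurj : Function.Surjective p)
    (hpconn : ∀ c, ((SimpleGraph.fromRel (fun u v => 0 < m u v)).induce {v : V | p v = c}).Connected)
    -- a generating sequence of cuts (Cᵢ splits a previously produced component into Aᵢ, Bᵢ)
    (A B X : Fin k → Finset V)
    (hX : ∀ i, X i = A i ∨ X i = B i)
    (hdisj : ∀ i, Disjoint (A i) (B i))
    (hAne : ∀ i, (A i).Nonempty) (hBne : ∀ i, (B i).Nonempty)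
    (hAconn : ∀ i, ((SimpleGraph.fromRel (fun u v => 0 < m u v)).induce (↑(A i))).Connected)
    (hBconn : ∀ i, ((SimpleGraph.fromRel (fun u v => 0 < m u v)).induce (↑(B i))).Connected)
    (hroot : A ⟨0, hk⟩ ∪ B ⟨0, hk⟩ = Finset.univ)
    (htree : ∀ i : Fin k, i.1 ≠ 0 →
      ∃ j : Fin k, j < i ∧ (A i ∪ B i = A j ∨ A i ∪ B i = B j))
    -- each side is either cut further later, or is a part of Π
    (hleafA : ∀ i : Fin k, (∃ j : Fin k, i < j ∧ A j ∪ B j = A i) ∨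
      (∃ c : Fin (k+1), A i = Finset.univ.filter (fun v => p v = c)))
    (hleafB : ∀ i : Fin k, (∃ j : Fin k, i < j ∧ A j ∪ B j = B i) ∨
      (∃ c : Fin (k+1), B i = Finset.univ.filter (fun v => p v = c)))
    -- the sequence of cuts produces exactly the partition Π
    (hpartsleaf : ∀ c : Fin (k+1), ∃ i : Fin k,
      Finset.univ.filter (fun v => p v = c) = A i ∨
      Finset.univ.filter (fun v => p v = c) = B i)
    -- the boundary divisor
    (D : V → ℤ)
    (hD : D = fun v => ∑ i : Fin k, (if v ∈ X i then (degAB m (A i) (B i) v : ℤ) else 0)) :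
    ¬ ∃ D₁ : V → ℤ, (∀ v, 0 ≤ D₁ v) ∧ (∃ σ : V → ℤ, (lap m).mulVec σ = D₁ - D) ∧
      (∀ c : Fin (k+1), ∃ v, p v = c ∧ D₁ v ≠ 0) := by
  classical
  rintro ⟨D₁, hD₁, ⟨σ, hσ⟩, hsupp⟩
  set Y : Fin k → Finset V := fun i => A i ∪ B i with hYdef
  set cuts : Finset V → Finset (Fin k) :=
    fun S => univ.filter (fun j => Y j ⊆ S) with hcutsdef
  have hYne : ∀ i, (Y i).Nonempty := by
    intro i; exact (hAne i).mono (by simp [hYdef, Finset.subset_union_left])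
  have hAsubY : ∀ i, A i ⊆ Y i := fun i => Finset.subset_union_left
  have hBsubY : ∀ i, B i ⊆ Y i := fun i => Finset.subset_union_right
  have hYnotA : ∀ i, ¬ (Y i ⊆ A i) := by
    intro i h
    obtain ⟨b, hb⟩ := hBne i
    exact (Finset.disjoint_right.mp (hdisj i)) hb (h (hBsubY i hb))
  have hYnotB : ∀ i, ¬ (Y i ⊆ B i) := by
    intro i h
    obtain ⟨a, ha⟩ := hAne i
    exact (Finset.disjoint_left.mp (hdisj i)) ha (h (hAsubY i ha))
  have htreeY : ∀ i : Fin k, i.1 ≠ 0 → ∃ j : Fin k, j < i ∧ (Y i = A j ∨ Y i = B j) :=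
    htree
  -- Lemma D: the sides are unions of fibers of `p`
  have hfibaux : ∀ n : ℕ, ∀ i : Fin k, k - i.1 = n → ∀ u v : V, p u = p v →
      ((u ∈ A i ↔ v ∈ A i) ∧ (u ∈ B i ↔ v ∈ B i)) := by
    intro n
    induction n using Nat.strong_induction_on with
    | _ n ih =>
      intro i hi u v hpv
      constructor
      · rcases hleafA i with ⟨j, hij, hYj⟩ | ⟨c, hc⟩
        · have hlt : k - j.1 < n := by
            have := j.isLt
            have : i.1 < j.1 := hij
            omega
          have hj := ih _ hlt j rfl u v hpv
          rw [← hYj]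
          simp only [Finset.mem_union]
          constructor
          · rintro (h | h)
            · exact Or.inl (hj.1.mp h)
            · exact Or.inr (hj.2.mp h)
          · rintro (h | h)
            · exact Or.inl (hj.1.mpr h)
            · exact Or.inr (hj.2.mpr h)
        · rw [hc]; simp [hpv]
      · rcases hleafB i with ⟨j, hij, hYj⟩ | ⟨c, hc⟩
        · have hlt : k - j.1 < n := by
            have := j.isLt
            have : i.1 < j.1 := hij
            omega
          have hj := ih _ hlt j rfl u v hpv
          rw [← hYj]
          simp only [Finset.mem_union]
          constructor
          · rintro (h | h)
            · exact Or.inl (hj.1.mp h)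
            · exact Or.inr (hj.2.mp h)
          · rintro (h | h)
            · exact Or.inl (hj.1.mpr h)
            · exact Or.inr (hj.2.mpr h)
        · rw [hc]; simp [hpv]
  have hfib : ∀ (i : Fin k) (u v : V), p u = p v →
      ((u ∈ A i ↔ v ∈ A i) ∧ (u ∈ B i ↔ v ∈ B i)) :=
    fun i => hfibaux (k - i.1) i rfl
  -- image of a side splits along a cut
  have himdisj : ∀ w : Fin k, Disjoint ((A w).image p) ((B w).image p) := by
    intro w
    rw [Finset.disjoint_left]
    rintro c hca hcb
    obtain ⟨a, ha, hpa⟩ := Finset.mem_image.mp hca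
    obtain ⟨b, hb, hpb⟩ := Finset.mem_image.mp hcb
    have hab : p a = p b := by rw [hpa, hpb]
    have := (hfib w a b hab).1.mp ha
    exact (Finset.disjoint_left.mp (hdisj w)) this hb
  have himsplit : ∀ (w : Fin k) (S : Finset V), Y w = S →
      (S.image p).card = ((A w).image p).card + ((B w).image p).card := by
    intro w S hYw
    rw [← hYw]
    have : Y w = A w ∪ B w := by rw [hYdef]
    rw [this, Finset.image_union]
    exact Finset.card_union_of_disjoint (himdisj w)
  -- cut decomposition counting
  have hmemcuts : ∀ (j : Fin k) (S : Finset V), j ∈ cuts S ↔ Y j ⊆ S := by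
    intro j S
    rw [hcutsdef]
    simp
  have hcutsdisj2 : ∀ w : Fin k, Disjoint (cuts (A w)) (cuts (B w)) := by
    intro w
    rw [Finset.disjoint_left]
    intro j hja hjb
    rw [hmemcuts] at hja hjb
    obtain ⟨y, hy⟩ := hYne j
    exact (Finset.disjoint_left.mp (hdisj w)) (hja hy) (hjb hy)
  have hwnotmem : ∀ w : Fin k, w ∉ cuts (A w) ∪ cuts (B w) := by
    intro w hmem
    rcases Finset.mem_union.mp hmem with h | h
    · exact hYnotA w ((hmemcuts w (A w)).mp h)
    · exact hYnotB w ((hmemcuts w (B w)).mp h)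
  have hsub : ∀ (w : Fin k) (S : Finset V), Y w = S →
      insert w (cuts (A w) ∪ cuts (B w)) ⊆ cuts S ∧
      (insert w (cuts (A w) ∪ cuts (B w))).card
        = 1 + (cuts (A w)).card + (cuts (B w)).card := by
    intro w S hYw
    constructor
    · intro j hj
      rw [hmemcuts]
      rcases Finset.mem_insert.mp hj with h | h
      · subst h; rw [← hYw]
      · rcases Finset.mem_union.mp h with h | h
        · exact Finset.Subset.trans ((hmemcuts j (A w)).mp h)
            (hYw ▸ hAsubY w)
        · exact Finset.Subset.trans ((hmemcuts j (B w)).mp h)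
            (hYw ▸ hBsubY w)
    · rw [Finset.card_insert_of_notMem (hwnotmem w),
        Finset.card_union_of_disjoint (hcutsdisj2 w)]
      omega
  -- counting lower bound for every side
  have hpartim : ∀ c : Fin (k+1), ∀ S : Finset V,
      S = univ.filter (fun v => p v = c) → (S.image p).card ≤ 1 := by
    intro c S hS
    have : S.image p ⊆ {c} := by
      intro d hd
      obtain ⟨a, ha, hpa⟩ := Finset.mem_image.mp hd
      rw [hS] at ha
      have : p a = c := (Finset.mem_filter.mp ha).2
      rw [← hpa, this]
      exact Finset.mem_singleton_self c
    calc (S.image p).card ≤ ({c} : Finset (Fin (k+1))).card := Finset.card_le_card this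
    _ = 1 := Finset.card_singleton c
  have klowaux : ∀ n : ℕ, ∀ i : Fin k, k - i.1 = n →
      (((A i).image p).card ≤ (cuts (A i)).card + 1 ∧
       ((B i).image p).card ≤ (cuts (B i)).card + 1) := by
    intro n
    induction n using Nat.strong_induction_on with
    | _ n ih =>
      intro i hi
      constructor
      · rcases hleafA i with ⟨j, hij, hYj⟩ | ⟨c, hc⟩
        · have hlt : k - j.1 < n := by
            have := j.isLt
            have : i.1 < j.1 := hij
            omega
          have hjk := ih _ hlt j rfl
          have h1 := himsplit j (A i) hYj
          have h2 := hsub j (A i) hYj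
          have h3 : 1 + (cuts (A j)).card + (cuts (B j)).card ≤ (cuts (A i)).card := by
            rw [← h2.2]
            exact Finset.card_le_card h2.1
          omega
        · exact le_trans (hpartim c (A i) hc) (by omega)
      · rcases hleafB i with ⟨j, hij, hYj⟩ | ⟨c, hc⟩
        · have hlt : k - j.1 < n := by
            have := j.isLt
            have : i.1 < j.1 := hij
            omega
          have hjk := ih _ hlt j rfl
          have h1 := himsplit j (B i) hYj
          have h2 := hsub j (B i) hYj
          have h3 : 1 + (cuts (A j)).card + (cuts (B j)).card ≤ (cuts (B i)).card := by
            rw [← h2.2]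
            exact Finset.card_le_card h2.1
          omega
        · exact le_trans (hpartim c (B i) hc) (by omega)
  have klow : ∀ i : Fin k,
      (((A i).image p).card ≤ (cuts (A i)).card + 1 ∧
       ((B i).image p).card ≤ (cuts (B i)).card + 1) :=
    fun i => klowaux (k - i.1) i rfl
  -- the master structural lemma
  have master : ∀ n : ℕ, ∀ (S : Finset V) (i₀ : ℕ),
      (S.image p).card ≤ n →
      (cuts S).card + 1 = (S.image p).card →
      ((∃ c, S = univ.filter (fun v => p v = c)) ∨ (∃ w : Fin k, i₀ ≤ w.1 ∧ Y w = S)) →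
      ((∀ j, j ∈ cuts S → i₀ ≤ j.1) ∧
       (∀ j, j ∈ cuts S →
         ((cuts (A j)).card + 1 = ((A j).image p).card ∧
          (cuts (B j)).card + 1 = ((B j).image p).card)) ∧
       (∀ j t, j ∈ cuts S → t ∈ cuts S → Y t ⊆ Y j →
         (t = j ∨ Y t ⊆ A j ∨ Y t ⊆ B j))) := by
    intro n
    induction n using Nat.strong_induction_on with
    | _ n ih =>
      intro S i₀ hn hgood hdis
      rcases hdis with ⟨c, hc⟩ | ⟨w, hw, hYw⟩
      · -- S is a part: no cut is contained in it
        have h1 : (S.image p).card ≤ 1 := hpartim c S hc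
        have h2 : cuts S = ∅ := Finset.card_eq_zero.mp (by omega)
        refine ⟨?_, ?_, ?_⟩
        · intro j hj; rw [h2] at hj; exact absurd hj (Finset.notMem_empty j)
        · intro j hj; rw [h2] at hj; exact absurd hj (Finset.notMem_empty j)
        · intro j t hj _ _; rw [h2] at hj; exact absurd hj (Finset.notMem_empty j)
      · -- S is split by the cut w
        have hims := himsplit w S hYw
        have hklA := klow w
        have hsb := hsub w S hYw
        have h3 : 1 + (cuts (A w)).card + (cuts (B w)).card ≤ (cuts S).card := by
          rw [← hsb.2]; exact Finset.card_le_card hsb.1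
        have haneim : 1 ≤ ((A w).image p).card :=
          Finset.card_pos.mpr ((hAne w).image p)
        have hbneim : 1 ≤ ((B w).image p).card :=
          Finset.card_pos.mpr ((hBne w).image p)
        have hgA : (cuts (A w)).card + 1 = ((A w).image p).card := by omega
        have hgB : (cuts (B w)).card + 1 = ((B w).image p).card := by omega
        have hseteq : cuts S = insert w (cuts (A w) ∪ cuts (B w)) :=
          (Finset.eq_of_subset_of_card_le hsb.1 (by omega)).symm
        have hdisA : (∃ c, A w = univ.filter (fun v => p v = c)) ∨
            (∃ w' : Fin k, w.1+1 ≤ w'.1 ∧ Y w' = A w) := by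
          rcases hleafA w with ⟨j, hwj, hYj⟩ | hc
          · exact Or.inr ⟨j, by have : w.1 < j.1 := hwj; omega, hYj⟩
          · exact Or.inl hc
        have hdisB : (∃ c, B w = univ.filter (fun v => p v = c)) ∨
            (∃ w' : Fin k, w.1+1 ≤ w'.1 ∧ Y w' = B w) := by
          rcases hleafB w with ⟨j, hwj, hYj⟩ | hc
          · exact Or.inr ⟨j, by have : w.1 < j.1 := hwj; omega, hYj⟩
          · exact Or.inl hc
        have QA := ih (((A w).image p).card) (by omega) (A w) (w.1+1)
          (le_refl _) hgA hdisA
        have QB := ih (((B w).image p).card) (by omega) (B w) (w.1+1)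
          (le_refl _) hgB hdisB
        have hmem : ∀ j, j ∈ cuts S → (j = w ∨ j ∈ cuts (A w) ∨ j ∈ cuts (B w)) := by
          intro j hj
          rw [hseteq] at hj
          rcases Finset.mem_insert.mp hj with h | h
          · exact Or.inl h
          · rcases Finset.mem_union.mp h with h | h
            · exact Or.inr (Or.inl h)
            · exact Or.inr (Or.inr h)
        refine ⟨?_, ?_, ?_⟩
        · intro j hj
          rcases hmem j hj with h | h | h
          · subst h; exact hw
          · have := QA.1 j h; omega
          · have := QB.1 j h; omega
        · intro j hj
          rcases hmem j hj with h | h | h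
          · subst h; exact ⟨hgA, hgB⟩
          · exact QA.2.1 j h
          · exact QB.2.1 j h
        · intro j t hj ht hYtj
          rcases hmem j hj with h | h | h
          · subst h
            rcases hmem t ht with h' | h' | h'
            · exact Or.inl h'
            · exact Or.inr (Or.inl ((hmemcuts t (A j)).mp h'))
            · exact Or.inr (Or.inr ((hmemcuts t (B j)).mp h'))
          · -- j inside A w
            have hjA : Y j ⊆ A w := (hmemcuts j (A w)).mp h
            rcases hmem t ht with h' | h' | h'
            · exfalso
              rw [h'] at hYtj
              exact hYnotA w (Finset.Subset.trans hYtj hjA)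
            · exact QA.2.2 j t h h' hYtj
            · exfalso
              have htB : Y t ⊆ B w := (hmemcuts t (B w)).mp h'
              obtain ⟨y, hy⟩ := hYne t
              exact (Finset.disjoint_left.mp (hdisj w))
                (hjA (hYtj hy)) (htB hy)
          · -- j inside B w
            have hjB : Y j ⊆ B w := (hmemcuts j (B w)).mp h
            rcases hmem t ht with h' | h' | h'
            · exfalso
              rw [h'] at hYtj
              exact hYnotB w (Finset.Subset.trans hYtj hjB)
            · exfalso
              have htA : Y t ⊆ A w := (hmemcuts t (A w)).mp h'
              obtain ⟨y, hy⟩ := hYne t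
              exact (Finset.disjoint_left.mp (hdisj w))
                (htA hy) (hjB (hYtj hy))
            · exact QB.2.2 j t h h' hYtj
  -- instantiate at the root
  have hcutsuniv : cuts univ = univ := by
    apply Finset.eq_univ_of_forall
    intro j
    rw [hmemcuts]
    exact Finset.subset_univ _
  have himuniv : (univ : Finset V).image p = univ := by
    apply Finset.eq_univ_of_forall
    intro c
    obtain ⟨v, hv⟩ := hsurj c
    exact Finset.mem_image.mpr ⟨v, Finset.mem_univ v, hv⟩
  have hgooduniv : (cuts univ).card + 1 = ((univ : Finset V).image p).card := by
    rw [hcutsuniv, himuniv]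
    simp [Finset.card_univ]
  have hrootmaster := master (k+1) univ 0
    (by rw [himuniv]; simp [Finset.card_univ])
    hgooduniv
    (Or.inr ⟨⟨0, hk⟩, Nat.zero_le _, by rw [hYdef]; exact hroot⟩)
  have hgoodside : ∀ i : Fin k,
      ((cuts (A i)).card + 1 = ((A i).image p).card ∧
       (cuts (B i)).card + 1 = ((B i).image p).card) := by
    intro i
    exact hrootmaster.2.1 i (by rw [hcutsuniv]; exact Finset.mem_univ i)
  have M2c : ∀ j t : Fin k, Y t ⊆ Y j → (t = j ∨ Y t ⊆ A j ∨ Y t ⊆ B j) := by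
    intro j t h
    exact hrootmaster.2.2 j t (by rw [hcutsuniv]; exact Finset.mem_univ j)
      (by rw [hcutsuniv]; exact Finset.mem_univ t) h
  have M2a : ∀ i j : Fin k, Y j ⊆ A i → i < j := by
    intro i j hYj
    have hdis : (∃ c, A i = univ.filter (fun v => p v = c)) ∨
        (∃ w' : Fin k, i.1+1 ≤ w'.1 ∧ Y w' = A i) := by
      rcases hleafA i with ⟨j', hij', hYj'⟩ | hc
      · exact Or.inr ⟨j', by have : i.1 < j'.1 := hij'; omega, hYj'⟩
      · exact Or.inl hc
    have Q := master (((A i).image p).card) (A i) (i.1+1) (le_refl _)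
      (hgoodside i).1 hdis
    have h := Q.1 j ((hmemcuts j (A i)).mpr hYj)
    exact Fin.lt_def.mpr (by omega)
  have M2b : ∀ i j : Fin k, Y j ⊆ B i → i < j := by
    intro i j hYj
    have hdis : (∃ c, B i = univ.filter (fun v => p v = c)) ∨
        (∃ w' : Fin k, i.1+1 ≤ w'.1 ∧ Y w' = B i) := by
      rcases hleafB i with ⟨j', hij', hYj'⟩ | hc
      · exact Or.inr ⟨j', by have : i.1 < j'.1 := hij'; omega, hYj'⟩
      · exact Or.inl hc
    have Q := master (((B i).image p).card) (B i) (i.1+1) (le_refl _)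
      (hgoodside i).2 hdis
    have h := Q.1 j ((hmemcuts j (B i)).mpr hYj)
    exact Fin.lt_def.mpr (by omega)
  -- Lemma E: laminarity trichotomy
  have htriaux : ∀ n : ℕ, ∀ i : Fin k, i.1 = n → ∀ j : Fin k, j < i →
      (Y i ⊆ A j ∨ Y i ⊆ B j ∨ Disjoint (Y i) (Y j)) := by
    intro n
    induction n using Nat.strong_induction_on with
    | _ n ih =>
      intro i hi j hji
      have hine : i.1 ≠ 0 := by
        have : j.1 < i.1 := hji
        omega
      obtain ⟨t, hti, hcase⟩ := htreeY i hine
      have htlt : t.1 < i.1 := hti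
      have hYit : Y i ⊆ Y t := by
        rcases hcase with h | h
        · rw [h]; exact hAsubY t
        · rw [h]; exact hBsubY t
      rcases lt_trichotomy j t with hjt | hjt | hjt
      · rcases ih t.1 (by omega) t rfl j hjt with h | h | h
        · exact Or.inl (Finset.Subset.trans hYit h)
        · exact Or.inr (Or.inl (Finset.Subset.trans hYit h))
        · exact Or.inr (Or.inr (Finset.disjoint_of_subset_left hYit h))
      · subst hjt
        rcases hcase with h | h
        · exact Or.inl (by rw [h])
        · exact Or.inr (Or.inl (by rw [h]))
      · have hjn : j.1 < n := by
          have : j.1 < i.1 := hji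
          omega
        have hnoYji : ¬ (Y j ⊆ Y i) := by
          intro hsubji
          rcases M2c i j hsubji with h' | h' | h'
          · exact absurd h' (Fin.ne_of_lt hji)
          · exact absurd (M2a i j h') (lt_asymm hji)
          · exact absurd (M2b i j h') (lt_asymm hji)
        rcases ih j.1 hjn j rfl t hjt with h | h | h
        · rcases hcase with hYiA | hYiB
          · exact absurd (hYiA ▸ h : Y j ⊆ Y i) hnoYji
          · refine Or.inr (Or.inr ((hdisj t).symm.mono ?_ h))
            rw [hYiB]
        · rcases hcase with hYiA | hYiB
          · refine Or.inr (Or.inr ((hdisj t).mono ?_ h))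
            rw [hYiA]
          · exact absurd (hYiB ▸ h : Y j ⊆ Y i) hnoYji
        · exact Or.inr (Or.inr (h.symm.mono_left hYit))
  have htri : ∀ i j : Fin k, j < i →
      (Y i ⊆ A j ∨ Y i ⊆ B j ∨ Disjoint (Y i) (Y j)) :=
    fun i => htriaux i.1 i rfl
  -- Lemma F: a pair is separated by at most one cut
  have hsepYA : ∀ (i : Fin k) (u v : V),
      ((u ∈ A i ∧ v ∈ B i) ∨ (u ∈ B i ∧ v ∈ A i)) →
      (u ∈ Y i ∧ v ∈ Y i) := by
    intro i u v h
    rcases h with ⟨h1, h2⟩ | ⟨h1, h2⟩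
    · exact ⟨hAsubY i h1, hBsubY i h2⟩
    · exact ⟨hBsubY i h1, hAsubY i h2⟩
  have hsep : ∀ (i j : Fin k) (u v : V),
      ((u ∈ A i ∧ v ∈ B i) ∨ (u ∈ B i ∧ v ∈ A i)) →
      ((u ∈ A j ∧ v ∈ B j) ∨ (u ∈ B j ∧ v ∈ A j)) → i = j := by
    intro i j u v hi hj
    by_contra hne
    have key : ∀ (a b : Fin k), b < a →
        ((u ∈ A a ∧ v ∈ B a) ∨ (u ∈ B a ∧ v ∈ A a)) →
        ((u ∈ A b ∧ v ∈ B b) ∨ (u ∈ B b ∧ v ∈ A b)) → False := by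
      intro a b hba ha hb
      have hu : u ∈ Y a := (hsepYA a u v ha).1
      have hv : v ∈ Y a := (hsepYA a u v ha).2
      rcases htri a b hba with h | h | h
      · rcases hb with ⟨h1, h2⟩ | ⟨h1, h2⟩
        · exact (Finset.disjoint_left.mp (hdisj b)) (h hv) h2
        · exact (Finset.disjoint_left.mp (hdisj b)) (h hu) h1
      · rcases hb with ⟨h1, h2⟩ | ⟨h1, h2⟩
        · exact (Finset.disjoint_left.mp (hdisj b)) h1 (h hu)
        · exact (Finset.disjoint_left.mp (hdisj b)) h2 (h hv)
      · rcases hb with ⟨h1, h2⟩ | ⟨h1, h2⟩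
        · exact (Finset.disjoint_left.mp h) hu (hAsubY b h1)
        · exact (Finset.disjoint_left.mp h) hu (hBsubY b h1)
    rcases lt_or_gt_of_ne hne with h | h
    · exact key j i h hj hi
    · exact key i j h hi hj
  -- the weight function
  set e : Fin k → ℕ := fun i => k - 1 - i.1 with hedef
  set wt : V → ℕ := fun v => ∑ i : Fin k, (if v ∈ X i then 2^(e i) else 0) with hwtdef
  have hXsubY : ∀ i, X i ⊆ Y i := by
    intro i; rcases hX i with h | h <;> rw [h]
    · exact hAsubY i
    · exact hBsubY i
  have hwfib : ∀ u v : V, p u = p v → wt u = wt v := by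
    intro u v h
    rw [hwtdef]
    apply Finset.sum_congr rfl
    intro i _
    have hiff : u ∈ X i ↔ v ∈ X i := by
      rcases hX i with h' | h'
      · rw [h']; exact (hfib i u v h).1
      · rw [h']; exact (hfib i u v h).2
    exact if_congr hiff rfl rfl
  have hwt : ∀ (i : Fin k) (u v : V), v ∈ X i → u ∈ Y i → u ∉ X i → wt u < wt v := by
    intro i u v hvX huY huX
    have hvY : v ∈ Y i := hXsubY i hvX
    have hbits : ∀ j : Fin k, j < i →
        ((if u ∈ X j then 2^(e j) else 0) = (if v ∈ X j then 2^(e j) else 0)) := by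
      intro j hj
      have hiff : (u ∈ X j) ↔ (v ∈ X j) := by
        rcases htri i j hj with h | h | h
        · rcases hX j with h' | h'
          · rw [h']; exact iff_of_true (h huY) (h hvY)
          · rw [h']
            exact iff_of_false
              (fun hu => (Finset.disjoint_left.mp (hdisj j)) (h huY) hu)
              (fun hv => (Finset.disjoint_left.mp (hdisj j)) (h hvY) hv)
        · rcases hX j with h' | h'
          · rw [h']
            exact iff_of_false
              (fun hu => (Finset.disjoint_left.mp (hdisj j)) hu (h huY))
              (fun hv => (Finset.disjoint_left.mp (hdisj j)) hv (h hvY))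
          · rw [h']; exact iff_of_true (h huY) (h hvY)
        · exact iff_of_false
            (fun hu => (Finset.disjoint_left.mp h) huY (hXsubY j hu))
            (fun hv => (Finset.disjoint_left.mp h) hvY (hXsubY j hv))
      exact if_congr hiff rfl rfl
    have hsplit : ∀ f : Fin k → ℕ, (∑ j, f j)
        = (∑ j ∈ univ.filter (fun j => j < i), f j) + f i
          + (∑ j ∈ univ.filter (fun j => i < j), f j) := by
      intro f
      have h1 : (univ : Finset (Fin k))
          = (univ.filter (fun j => j < i)) ∪ (insert i (univ.filter (fun j => i < j))) := by
        ext j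
        simp only [Finset.mem_union, Finset.mem_insert, Finset.mem_filter,
          Finset.mem_univ, true_and]
        rcases lt_trichotomy j i with h | h | h <;> tauto
      have hd : Disjoint (univ.filter (fun j => j < i))
          (insert i (univ.filter (fun j => i < j))) := by
        rw [Finset.disjoint_left]
        intro a ha hb
        simp only [Finset.mem_filter, Finset.mem_univ, true_and] at ha
        rcases Finset.mem_insert.mp hb with rfl | hb'
        · exact lt_irrefl _ ha
        · simp only [Finset.mem_filter, Finset.mem_univ, true_and] at hb'
          exact lt_asymm ha hb'
      have hi2 : i ∉ univ.filter (fun j => i < j) := by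
        simp only [Finset.mem_filter, Finset.mem_univ, true_and]
        exact lt_irrefl i
      calc (∑ j, f j) = ∑ j ∈ (univ.filter (fun j => j < i))
            ∪ (insert i (univ.filter (fun j => i < j))), f j := by rw [← h1]
      _ = (∑ j ∈ univ.filter (fun j => j < i), f j)
            + ∑ j ∈ insert i (univ.filter (fun j => i < j)), f j :=
          Finset.sum_union hd
      _ = _ := by rw [Finset.sum_insert hi2]; ring
    have hinj : ∀ a ∈ univ.filter (fun j => i < j), ∀ b ∈ univ.filter (fun j => i < j),
        e a = e b → a = b := by
      intro a ha b hb hab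
      simp only [Finset.mem_filter, Finset.mem_univ, true_and] at ha hb
      have h1 : a.1 < k := a.isLt
      have h2 : b.1 < k := b.isLt
      have h3 : i.1 < a.1 := ha
      have h4 : i.1 < b.1 := hb
      simp only [hedef] at hab
      exact Fin.ext (by omega)
    have him : (univ.filter (fun j => i < j)).image e ⊆ Finset.range (e i) := by
      intro t ht
      obtain ⟨j, hj, rfl⟩ := Finset.mem_image.mp ht
      simp only [Finset.mem_filter, Finset.mem_univ, true_and] at hj
      have h1 : j.1 < k := j.isLt
      have h2 : i.1 < j.1 := hj
      simp only [hedef, Finset.mem_range]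
      omega
    have hgeo2 : (∑ j ∈ univ.filter (fun j => i < j), 2^(e j)) < 2^(e i) := by
      have h1 : (∑ j ∈ univ.filter (fun j => i < j), 2^(e j))
          = ∑ t ∈ (univ.filter (fun j => i < j)).image e, 2^t :=
        (Finset.sum_image hinj).symm
      rw [h1]
      calc ∑ t ∈ (univ.filter (fun j => i < j)).image e, 2^t
          ≤ ∑ t ∈ Finset.range (e i), 2^t := Finset.sum_le_sum_of_subset him
      _ < 2^(e i) := aux_geom _
    have hwu := hsplit (fun j => if u ∈ X j then 2^(e j) else 0)
    have hwv := hsplit (fun j => if v ∈ X j then 2^(e j) else 0)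
    have hL : (∑ j ∈ univ.filter (fun j => j < i), if u ∈ X j then 2^(e j) else 0)
        = (∑ j ∈ univ.filter (fun j => j < i), if v ∈ X j then 2^(e j) else 0) := by
      apply Finset.sum_congr rfl
      intro j hj
      exact hbits j (Finset.mem_filter.mp hj).2
    have hRu : (∑ j ∈ univ.filter (fun j => i < j), if u ∈ X j then 2^(e j) else 0)
        ≤ ∑ j ∈ univ.filter (fun j => i < j), 2^(e j) := by
      apply Finset.sum_le_sum
      intro j _
      by_cases h : u ∈ X j <;> simp [h]
    have hui : (if u ∈ X i then 2^(e i) else 0) = 0 := if_neg huX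
    have hvi : (if v ∈ X i then 2^(e i) else 0) = 2^(e i) := if_pos hvX
    have hu' : wt u = (∑ j ∈ univ.filter (fun j => j < i), if u ∈ X j then 2^(e j) else 0)
        + (if u ∈ X i then 2^(e i) else 0)
        + (∑ j ∈ univ.filter (fun j => i < j), if u ∈ X j then 2^(e j) else 0) := by
      rw [hwtdef]; exact hwu
    have hv' : wt v = (∑ j ∈ univ.filter (fun j => j < i), if v ∈ X j then 2^(e j) else 0)
        + (if v ∈ X i then 2^(e i) else 0)
        + (∑ j ∈ univ.filter (fun j => i < j), if v ∈ X j then 2^(e j) else 0) := by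
      rw [hwtdef]; exact hwv
    rw [hu', hv', hL, hui, hvi]
    omega
  -- the chosen support points
  choose x hx hxD using hsupp
  -- intra-part rank
  set H : SimpleGraph V := SimpleGraph.fromRel (fun u v => 0 < m u v ∧ p u = p v) with hHdef
  set r : V → ℕ := fun v => H.dist (x (p v)) v with hrdef
  have hreach : ∀ v : V, H.Reachable (x (p v)) v := by
    intro v
    have hx' : x (p v) ∈ {w : V | p w = p v} := hx (p v)
    have hv' : v ∈ {w : V | p w = p v} := rfl
    have hr : ((SimpleGraph.fromRel (fun u v => 0 < m u v)).induce
        {w : V | p w = p v}).Reachable ⟨x (p v), hx'⟩ ⟨v, hv'⟩ :=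
      (hpconn (p v)).preconnected _ _
    have hadjmap : ∀ a b : {w : V | p w = p v},
        ((SimpleGraph.fromRel (fun u v => 0 < m u v)).induce {w : V | p w = p v}).Adj a b →
        H.Adj a.1 b.1 := by
      rintro ⟨a, ha⟩ ⟨b, hb⟩ hadj
      have h2 : (SimpleGraph.fromRel (fun u v => 0 < m u v)).Adj a b := hadj
      rw [SimpleGraph.fromRel_adj] at h2
      rw [hHdef, SimpleGraph.fromRel_adj]
      refine ⟨h2.1, ?_⟩
      have ha' : p a = p v := ha
      have hb' : p b = p v := hb
      have hpe : p a = p b := by rw [ha', hb']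
      rcases h2.2 with h | h
      · exact Or.inl ⟨h, hpe⟩
      · exact Or.inr ⟨h, hpe.symm⟩
    exact hr.map (⟨Subtype.val, fun h => hadjmap _ _ h⟩ :
      (SimpleGraph.fromRel (fun u v => 0 < m u v)).induce {w : V | p w = p v} →g H)
  have hrstep : ∀ v : V, v ≠ x (p v) → ∃ u, p u = p v ∧ 0 < m u v ∧ r u < r v := by
    intro v hne
    obtain ⟨u, hadj, hdist⟩ := aux_penult H (x (p v)) v (Ne.symm hne) (hreach v)
    rw [hHdef, SimpleGraph.fromRel_adj] at hadj
    have hpuv : p u = p v ∧ 0 < m u v := by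
      rcases hadj.2 with ⟨hm, hp⟩ | ⟨hm, hp⟩
      · exact ⟨hp, hm⟩
      · exact ⟨hp.symm, by rw [hsymm]; exact hm⟩
    refine ⟨u, hpuv.1, hpuv.2, ?_⟩
    have hru : r u = H.dist (x (p v)) u := by
      rw [hrdef]
      simp only [hpuv.1]
    have hrv : r v = H.dist (x (p v)) v := by rw [hrdef]
    rw [hru, hrv]
    exact hdist
  -- the global rank
  set N : ℕ := univ.sup r + 1 with hNdef
  have hrN : ∀ v, r v < N := by
    intro v
    have : r v ≤ univ.sup r := Finset.le_sup (Finset.mem_univ v)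
    omega
  set ρ : V → ℕ := fun v => N * wt v + r v with hρdef
  have hρcross : ∀ u v : V, wt u < wt v → ρ u < ρ v := by
    intro u v h
    have h1 : r u < N := hrN u
    have : N * wt u + N ≤ N * wt v := by
      calc N * wt u + N = N * (wt u + 1) := by ring
      _ ≤ N * wt v := Nat.mul_le_mul_left N (by omega)
    simp only [hρdef]
    omega
  have hρsame : ∀ u v : V, p u = p v → r u < r v → ρ u < ρ v := by
    intro u v h hr
    have := hwfib u v h
    simp only [hρdef, this]
    omega
  -- the key inequality
  have hstar : ∀ v : V,
      (∑ i : Fin k, if v ∈ X i then degAB m (A i) (B i) v else 0)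
        + (if v = x (p v) then 0 else 1)
      ≤ ∑ u ∈ univ.filter (fun u => ρ u < ρ v), m v u := by
    intro v
    set T : Fin k → Finset V :=
      fun i => if v ∈ X i then (if v ∈ A i then B i else A i) else ∅ with hTdef
    have hTprop : ∀ i : Fin k, ∀ u, u ∈ T i →
        (((u ∈ A i ∧ v ∈ B i) ∨ (u ∈ B i ∧ v ∈ A i)) ∧ v ∈ X i ∧ u ∈ Y i ∧ u ∉ X i) := by
      intro i u hu
      simp only [hTdef] at hu
      by_cases hvX : v ∈ X i
      · rw [if_pos hvX] at hu
        by_cases hvA : v ∈ A i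
        · rw [if_pos hvA] at hu
          refine ⟨Or.inr ⟨hu, hvA⟩, hvX, hBsubY i hu, ?_⟩
          rcases hX i with h | h
          · rw [h]
            exact fun huA => (Finset.disjoint_left.mp (hdisj i)) huA hu
          · exfalso
            rw [h] at hvX
            exact (Finset.disjoint_left.mp (hdisj i)) hvA hvX
        · rw [if_neg hvA] at hu
          have hXB : X i = B i := by
            rcases hX i with h | h
            · exfalso; rw [h] at hvX; exact hvA hvX
            · exact h
          have hvB : v ∈ B i := by rw [← hXB]; exact hvX
          refine ⟨Or.inl ⟨hu, hvB⟩, hvX, hAsubY i hu, ?_⟩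
          rw [hXB]
          exact fun huB => (Finset.disjoint_left.mp (hdisj i)) hu huB
      · rw [if_neg hvX] at hu
        exact absurd hu (Finset.notMem_empty u)
    have hDsum : (∑ i : Fin k, if v ∈ X i then degAB m (A i) (B i) v else 0)
        = ∑ i : Fin k, ∑ u ∈ T i, m v u := by
      apply Finset.sum_congr rfl
      intro i _
      simp only [hTdef]
      by_cases hvX : v ∈ X i
      · rw [if_pos hvX, if_pos hvX]
        by_cases hvA : v ∈ A i
        · rw [if_pos hvA, degAB, if_pos hvA]
        · have hXB : X i = B i := by
            rcases hX i with h | h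
            · exfalso; rw [h] at hvX; exact hvA hvX
            · exact h
          have hvB : v ∈ B i := by rw [← hXB]; exact hvX
          rw [if_neg hvA, degAB, if_neg hvA, if_pos hvB]
      · rw [if_neg hvX, if_neg hvX, Finset.sum_empty]
    have hTdisj : (↑(univ : Finset (Fin k)) : Set (Fin k)).PairwiseDisjoint T := by
      intro a _ b _ hab
      rw [Function.onFun, Finset.disjoint_left]
      intro u hua hub
      exact hab (hsep a b u v (hTprop a u hua).1 (hTprop b u hub).1)
    have hbiU : (∑ i : Fin k, ∑ u ∈ T i, m v u) = ∑ u ∈ univ.biUnion T, m v u :=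
      (Finset.sum_biUnion hTdisj).symm
    have hsubfil : univ.biUnion T ⊆ univ.filter (fun u => ρ u < ρ v) := by
      intro u hu
      obtain ⟨i, _, hui⟩ := Finset.mem_biUnion.mp hu
      obtain ⟨hsp, hvX, huY, huX⟩ := hTprop i u hui
      exact Finset.mem_filter.mpr ⟨Finset.mem_univ u, hρcross u v (hwt i u v hvX huY huX)⟩
    by_cases hvx : v = x (p v)
    · rw [if_pos hvx, hDsum, hbiU]
      simpa using Finset.sum_le_sum_of_subset hsubfil
    · rw [if_neg hvx]
      obtain ⟨u', hpu', hmu', hru'⟩ := hrstep v hvx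
      have hρu' : ρ u' < ρ v := hρsame u' v hpu' hru'
      have hu'fil : u' ∈ univ.filter (fun u => ρ u < ρ v) :=
        Finset.mem_filter.mpr ⟨Finset.mem_univ _, hρu'⟩
      have hu'nb : u' ∉ univ.biUnion T := by
        intro hu
        obtain ⟨i, _, hui⟩ := Finset.mem_biUnion.mp hu
        rcases (hTprop i u' hui).1 with ⟨h1, h2⟩ | ⟨h1, h2⟩
        · exact (Finset.disjoint_left.mp (hdisj i)) ((hfib i u' v hpu').1.mp h1) h2
        · exact (Finset.disjoint_left.mp (hdisj i)) h2 ((hfib i u' v hpu').2.mp h1)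
      have hins : insert u' (univ.biUnion T) ⊆ univ.filter (fun u => ρ u < ρ v) := by
        intro u hu
        rcases Finset.mem_insert.mp hu with rfl | hu'
        · exact hu'fil
        · exact hsubfil hu'
      have h1 : (∑ u ∈ insert u' (univ.biUnion T), m v u)
          ≤ ∑ u ∈ univ.filter (fun u => ρ u < ρ v), m v u :=
        Finset.sum_le_sum_of_subset hins
      rw [Finset.sum_insert hu'nb] at h1
      have h2 : 1 ≤ m v u' := by
        rw [hsymm v u']
        omega
      rw [hDsum, hbiU]
      omega
  -- final contradiction
  have hNe : Nonempty V := ⟨x 0⟩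
  obtain ⟨v₁, -, hv₁⟩ := Finset.exists_min_image (univ : Finset V) σ Finset.univ_nonempty
  have hSne : (univ.filter (fun v => σ v = σ v₁)).Nonempty :=
    ⟨v₁, Finset.mem_filter.mpr ⟨Finset.mem_univ _, rfl⟩⟩
  obtain ⟨v₀, hv₀S, hv₀min⟩ :=
    Finset.exists_min_image (univ.filter (fun v => σ v = σ v₁)) ρ hSne
  have hσv₀ : σ v₀ = σ v₁ := (Finset.mem_filter.mp hv₀S).2
  have hlow : ∀ u, ρ u < ρ v₀ → σ v₀ + 1 ≤ σ u := by
    intro u hu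
    have hune : σ u ≠ σ v₁ := by
      intro h
      have := hv₀min u (Finset.mem_filter.mpr ⟨Finset.mem_univ _, h⟩)
      omega
    have := hv₁ u (Finset.mem_univ u)
    omega
  have hlap : (lap m).mulVec σ v₀ = ∑ u, (m v₀ u : ℤ) * (σ v₀ - σ u) := by
    have h0 : (lap m).mulVec σ v₀ = ∑ u, lap m v₀ u * σ u := by
      simp [Matrix.mulVec, dotProduct]
    rw [h0]
    have hterm : ∀ u : V, lap m v₀ u * σ u
        = (if v₀ = u then ((∑ w, (m v₀ w : ℤ)) + (m v₀ u : ℤ)) * σ u else 0)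
          - (m v₀ u : ℤ) * σ u := by
      intro u
      by_cases h : v₀ = u
      · subst h
        have h1 : lap m v₀ v₀ = ∑ w, (m v₀ w : ℤ) := if_pos rfl
        rw [h1, if_pos rfl]
        ring
      · have h1 : lap m v₀ u = -(m v₀ u : ℤ) := if_neg h
        rw [h1, if_neg h]
        ring
    rw [Finset.sum_congr rfl (fun u _ => hterm u), Finset.sum_sub_distrib]
    rw [Finset.sum_ite_eq (univ : Finset V) v₀
      (fun u => ((∑ w, (m v₀ w : ℤ)) + (m v₀ u : ℤ)) * σ u)]
    rw [if_pos (Finset.mem_univ v₀)]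
    have hml : (m v₀ v₀ : ℤ) = 0 := by rw [hloop v₀]; rfl
    rw [hml]
    have : ∀ u : V, (m v₀ u : ℤ) * (σ v₀ - σ u)
        = (m v₀ u : ℤ) * σ v₀ - (m v₀ u : ℤ) * σ u := fun u => by ring
    rw [Finset.sum_congr rfl (fun u _ => this u), Finset.sum_sub_distrib,
      ← Finset.sum_mul]
    ring
  have hdrop : (∑ u, (m v₀ u : ℤ) * (σ v₀ - σ u))
      ≤ ∑ u ∈ univ.filter (fun u => ρ u < ρ v₀), (m v₀ u : ℤ) * (σ v₀ - σ u) := by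
    rw [← Finset.sum_filter_add_sum_filter_not (univ : Finset V)
      (fun u => ρ u < ρ v₀) (fun u => (m v₀ u : ℤ) * (σ v₀ - σ u))]
    have hnp : (∑ u ∈ univ.filter (fun u => ¬ ρ u < ρ v₀),
        (m v₀ u : ℤ) * (σ v₀ - σ u)) ≤ 0 := by
      apply Finset.sum_nonpos
      intro u _
      apply mul_nonpos_of_nonneg_of_nonpos
      · positivity
      · have := hv₁ u (Finset.mem_univ u)
        omega
    omega
  have hbound : (∑ u ∈ univ.filter (fun u => ρ u < ρ v₀), (m v₀ u : ℤ) * (σ v₀ - σ u))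
      ≤ -(∑ u ∈ univ.filter (fun u => ρ u < ρ v₀), (m v₀ u : ℤ)) := by
    rw [← Finset.sum_neg_distrib]
    apply Finset.sum_le_sum
    intro u hu
    have h1 : σ v₀ + 1 ≤ σ u := hlow u (Finset.mem_filter.mp hu).2
    have h2 : (0 : ℤ) ≤ (m v₀ u : ℤ) := by positivity
    nlinarith
  have hstar₀ := hstar v₀
  have hcastsum : (∑ u ∈ univ.filter (fun u => ρ u < ρ v₀), (m v₀ u : ℤ))
      = ((∑ u ∈ univ.filter (fun u => ρ u < ρ v₀), m v₀ u : ℕ) : ℤ) := by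
    push_cast
    rfl
  have hDcast : D v₀ = ((∑ i : Fin k, if v₀ ∈ X i then degAB m (A i) (B i) v₀ else 0 : ℕ) : ℤ) := by
    rw [hD]
    push_cast
    apply Finset.sum_congr rfl
    intro i _
    split <;> simp
  have hσ₀ : (lap m).mulVec σ v₀ = D₁ v₀ - D v₀ := by
    rw [hσ]
    rfl
  -- assemble
  have hkey : D₁ v₀ ≤ D v₀
      - ((∑ i : Fin k, if v₀ ∈ X i then degAB m (A i) (B i) v₀ else 0 : ℕ) : ℤ)
      - ((if v₀ = x (p v₀) then 0 else 1 : ℕ) : ℤ) := by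
    have h1 : D₁ v₀ - D v₀ ≤ -(∑ u ∈ univ.filter (fun u => ρ u < ρ v₀), (m v₀ u : ℤ)) := by
      rw [← hσ₀, hlap]
      exact le_trans hdrop hbound
    have h2 : ((∑ i : Fin k, if v₀ ∈ X i then degAB m (A i) (B i) v₀ else 0 : ℕ) : ℤ)
        + ((if v₀ = x (p v₀) then 0 else 1 : ℕ) : ℤ)
        ≤ (∑ u ∈ univ.filter (fun u => ρ u < ρ v₀), (m v₀ u : ℤ)) := by
      rw [hcastsum]
      exact_mod_cast hstar₀
    omega
  by_cases hvx : v₀ = x (p v₀)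
  · rw [if_pos hvx] at hkey
    rw [hDcast] at hkey
    have h0 : D₁ v₀ ≤ 0 := by push_cast at hkey; omega
    have h1 : D₁ v₀ = 0 := le_antisymm h0 (hD₁ v₀)
    have := hxD (p v₀)
    rw [← hvx] at this
    exact this h1
  · rw [if_neg hvx] at hkey
    rw [hDcast] at hkey
    have h0 : D₁ v₀ ≤ -1 := by push_cast at hkey; omega
    have := hD₁ v₀
    omega
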